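/- arXiv:1705.09770 — 2 statements merged into one kernel-verified Lean document; each statement's English description precedes it below -/
import Mathlib

section
/- Let L(θ) = (w/ln 10)·ln(Δh/sin θ) + g₃·(1 − cos θ)² on (0, π/2) with w = 20, g₃ = 15, Δh > 0. Then L attains a unique global minimum at the angle θ* ∈ (0, π/2) satisfying 2g₃·cos³ θ* − 2g₃·cos² θ* − (w/ln 10 + 2g₃)·cos θ* + 2g₃ = 0. -/
noncomputable def Gfun (k c : ℝ) : ℝ := -(k/2) * Real.log (1 - c^2) + 15*(1-c)^2

lemma Gfun_hasDerivAt (k x : ℝ) (hx : x ∈ Set.Ioo (-1:ℝ) 1) :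
    HasDerivAt (Gfun k) (k*x/(1-x^2) - 30*(1-x)) x := by
  obtain ⟨h1, h2⟩ := hx
  have hne : (1:ℝ) - x^2 ≠ 0 := by nlinarith
  have hsq : HasDerivAt (fun c : ℝ => 1 - c^2) (-(2*x)) x := by
    simpa using (hasDerivAt_pow 2 x).const_sub 1
  have hlog : HasDerivAt (fun c : ℝ => Real.log (1 - c^2)) ((-(2*x))/(1-x^2)) x :=
    hsq.log hne
  have hq : HasDerivAt (fun c : ℝ => 15*(1-c)^2) (15*(2*(1-x)*(-1))) x := by
    have h0 : HasDerivAt (fun c : ℝ => 1 - c) (-1) x := (hasDerivAt_id x).const_sub 1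
    simpa using (h0.pow 2).const_mul 15
  have := (hlog.const_mul (-(k/2))).add hq
  refine HasDerivAt.congr_deriv this ?_
  ring

lemma Gfun_min (k : ℝ) (hk : 0 < k) :
    ∃ c ∈ Set.Ioo (0:ℝ) 1,
      (30*c^3 - 30*c^2 - (k+30)*c + 30 = 0) ∧
      ∀ x ∈ Set.Ioo (-1:ℝ) 1, x ≠ c → Gfun k c < Gfun k x := by
  set f : ℝ → ℝ := fun c => 30*c^3 - 30*c^2 - (k+30)*c + 30 with hf
  have hcont : ContinuousOn f (Set.Icc (0:ℝ) 1) := by fun_prop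
  have h0 : (0:ℝ) ∈ Set.Ioo (f 1) (f 0) := by
    constructor <;> simp [hf] <;> nlinarith
  obtain ⟨c, hcmem, hfc⟩ := intermediate_value_Ioo' (by norm_num : (0:ℝ) ≤ 1) hcont h0
  obtain ⟨hc0, hc1⟩ := hcmem
  refine ⟨c, ⟨hc0, hc1⟩, by simpa [hf] using hfc, ?_⟩
  have hfc' : 30*c^3 - 30*c^2 - (k+30)*c + 30 = 0 := by simpa [hf] using hfc
  -- derivative sign
  have hderiv : ∀ x ∈ Set.Ioo (-1:ℝ) 1, deriv (Gfun k) x = k*x/(1-x^2) - 30*(1-x) :=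
    fun x hx => (Gfun_hasDerivAt k x hx).deriv
  have hcontG : ∀ x ∈ Set.Ioo (-1:ℝ) 1, ContinuousAt (Gfun k) x :=
    fun x hx => (Gfun_hasDerivAt k x hx).continuousAt
  have hanti : StrictAntiOn (Gfun k) (Set.Ioc (-1:ℝ) c) := by
    apply strictAntiOn_of_deriv_neg (convex_Ioc _ _)
    · exact fun x hx => (hcontG x ⟨hx.1, lt_of_le_of_lt hx.2 hc1⟩).continuousWithinAt
    · intro x hx
      rw [interior_Ioc] at hx
      obtain ⟨hx1, hx2⟩ := hx
      have hxm : x ∈ Set.Ioo (-1:ℝ) 1 := ⟨hx1, hx2.trans hc1⟩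
      rw [hderiv x hxm]
      have hpos : (0:ℝ) < 1 - x^2 := by nlinarith [hxm.2]
      rw [div_sub' (ne_of_gt hpos), div_neg_iff]
      right
      refine ⟨?_, hpos⟩
      rcases le_or_gt x 0 with h | h
      · nlinarith
      · have hcx : (0:ℝ) < c - x := by linarith
        have hbr : (0:ℝ) < 1 + x + c - x^2 - x*c - c^2 := by nlinarith
        nlinarith [mul_pos hcx hbr, mul_pos hk hcx]
  have hmono : StrictMonoOn (Gfun k) (Set.Ico c 1) := by
    apply strictMonoOn_of_deriv_pos (convex_Ico _ _)
    · exact fun x hx => (hcontG x ⟨(show (-1:ℝ) < c by linarith).trans_le hx.1, hx.2⟩).continuousWithinAt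
    · intro x hx
      rw [interior_Ico] at hx
      obtain ⟨hx1, hx2⟩ := hx
      have hxm : x ∈ Set.Ioo (-1:ℝ) 1 := ⟨by linarith, hx2⟩
      rw [hderiv x hxm]
      have hpos : (0:ℝ) < 1 - x^2 := by nlinarith
      rw [div_sub' (ne_of_gt hpos), div_pos_iff]
      left
      refine ⟨?_, hpos⟩
      have hxc : (0:ℝ) < x - c := by linarith
      have hbr : (0:ℝ) < 1 + x + c - x^2 - x*c - c^2 := by nlinarith
      nlinarith [mul_pos hxc hbr, mul_pos hk hxc]
  intro x hx hne
  rcases lt_or_gt_of_ne hne with h | h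
  · exact hanti ⟨hx.1, h.le⟩ ⟨by linarith, le_refl c⟩ h
  · exact hmono ⟨le_refl c, hc1⟩ ⟨h.le, hx.2⟩ h

/-- `L(θ) = (w/ln 10)·ln(Δh/sin θ) + g₃·(1 − cos θ)²` (w = 20, g₃ = 15, Δh > 0) attains a
unique global minimum on `(0, π/2)` at the angle `θ*` satisfying
`2g₃ cos³θ* − 2g₃ cos²θ* − (w/ln 10 + 2g₃) cos θ* + 2g₃ = 0`. -/
theorem stmt5 (Δh : ℝ) (hΔh : 0 < Δh) :
    ∃ θs ∈ Set.Ioo (0 : ℝ) (Real.pi / 2),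
      (2 * 15 * Real.cos θs ^ 3 - 2 * 15 * Real.cos θs ^ 2
        - (20 / Real.log 10 + 2 * 15) * Real.cos θs + 2 * 15 = 0) ∧
      ∀ θ ∈ Set.Ioo (0 : ℝ) (Real.pi / 2), θ ≠ θs →
        (20 / Real.log 10) * Real.log (Δh / Real.sin θs) + 15 * (1 - Real.cos θs) ^ 2
          < (20 / Real.log 10) * Real.log (Δh / Real.sin θ) + 15 * (1 - Real.cos θ) ^ 2 := by
  set k : ℝ := 20 / Real.log 10 with hkdef
  have hk : 0 < k := div_pos (by norm_num) (Real.log_pos (by norm_num))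
  obtain ⟨c, ⟨hc0, hc1⟩, hcube, hmin⟩ := Gfun_min k hk
  set θs := Real.arccos c with hθs
  have hcosθs : Real.cos θs = c := Real.cos_arccos (by linarith) (by linarith)
  have hθs0 : 0 < θs := Real.arccos_pos.mpr hc1
  have hθshalf : θs < Real.pi / 2 := by
    rw [hθs, Real.arccos_eq_pi_div_two_sub_arcsin]
    have := Real.arcsin_pos.mpr hc0
    linarith
  -- rewriting L
  have hL : ∀ θ ∈ Set.Ioo (0 : ℝ) (Real.pi / 2),
      (20 / Real.log 10) * Real.log (Δh / Real.sin θ) + 15 * (1 - Real.cos θ) ^ 2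
        = k * Real.log Δh + Gfun k (Real.cos θ) := by
    intro θ hθ
    have hsin : 0 < Real.sin θ := Real.sin_pos_of_pos_of_lt_pi hθ.1
      (lt_trans hθ.2 (by linarith [Real.pi_pos]))
    have h1 : 1 - Real.cos θ ^ 2 = Real.sin θ ^ 2 := by
      have := Real.sin_sq_add_cos_sq θ; linarith
    rw [Real.log_div (ne_of_gt hΔh) (ne_of_gt hsin)]
    unfold Gfun
    rw [h1, Real.log_pow]
    push_cast
    ring
  refine ⟨θs, ⟨hθs0, hθshalf⟩, ?_, ?_⟩
  · rw [hcosθs]; linarith [hcube]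
  · intro θ hθ hne
    have hθπ : θ ∈ Set.Icc 0 Real.pi :=
      ⟨hθ.1.le, le_trans hθ.2.le (by linarith [Real.pi_pos])⟩
    have hθsπ : θs ∈ Set.Icc 0 Real.pi :=
      ⟨hθs0.le, le_trans hθshalf.le (by linarith [Real.pi_pos])⟩
    have hcosne : Real.cos θ ≠ c := by
      rw [← hcosθs]
      exact fun h => hne (Real.injOn_cos hθπ hθsπ h)
    have hcosmem : Real.cos θ ∈ Set.Ioo (-1:ℝ) 1 := by
      constructor
      · nlinarith [Real.neg_one_le_cos θ, Real.cos_pos_of_mem_Ioo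
          (Set.mem_Ioo.mpr ⟨by linarith [hθ.1, Real.pi_pos], hθ.2⟩)]
      · rw [← Real.cos_zero]
        exact Real.cos_lt_cos_of_nonneg_of_le_pi (le_refl 0) hθπ.2 hθ.1
    have := hmin (Real.cos θ) hcosmem hcosne
    rw [hL θ hθ, hL θs ⟨hθs0, hθshalf⟩, hcosθs]
    linarith
end

section
/- For a single user at fixed altitude difference Δh > 0 and zero 2D horizontal offset in y, the function h(x) = (w/ln 10)·ln(√(x² + Δh²)) + g₃·(1 − x/√(x² + Δh²))² of the horizontal distance x > 0 satisfies: h is strictly decreasing near 0⁺ at rate dominated by the g₃ term and strictly increasing as x → ∞; hence h attains a minimum at some x* ∈ (0, ∞). -/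
open Real Set


lemma aux_log10_gt_two : (2:ℝ) < Real.log 10 := by
  have h : Real.exp 2 < 10 := by
    rw [show (2:ℝ) = 1 + 1 by ring, Real.exp_add]
    nlinarith [Real.exp_one_lt_d9, Real.exp_pos 1]
  linarith [(Real.lt_log_iff_exp_lt (by norm_num : (0:ℝ) < 10)).mpr h]

lemma aux_log10_lt_three : Real.log 10 < 3 := by
  have h : (10:ℝ) < Real.exp 3 := by
    rw [show (3:ℝ) = 1 + 1 + 1 by ring, Real.exp_add, Real.exp_add]
    nlinarith [Real.exp_one_gt_d9, Real.exp_pos 1]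
  calc Real.log 10 < Real.log (Real.exp 3) := Real.log_lt_log (by norm_num) h
    _ = 3 := Real.log_exp 3

noncomputable def auxD (Δh x : ℝ) : ℝ :=
  20 * x / ((x ^ 2 + Δh ^ 2) * Real.log 10)
    - 30 * (1 - x / Real.sqrt (x ^ 2 + Δh ^ 2)) * Δh ^ 2 / (Real.sqrt (x ^ 2 + Δh ^ 2)) ^ 3

lemma auxD_neg (Δh : ℝ) (hΔh : 0 < Δh) (x : ℝ) (hx : 0 < x) (hx2 : x < Δh / 4) :
    auxD Δh x < 0 := by
  have hqpos : (0:ℝ) < x ^ 2 + Δh ^ 2 := by positivity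
  set s := Real.sqrt (x ^ 2 + Δh ^ 2) with hsdef
  have hs : 0 < s := Real.sqrt_pos.mpr hqpos
  have hs2 : s ^ 2 = x ^ 2 + Δh ^ 2 := Real.sq_sqrt hqpos.le
  have hL2 := aux_log10_gt_two
  have hsge : Δh ≤ s := by
    have h := Real.sqrt_le_sqrt (show Δh ^ 2 ≤ x ^ 2 + Δh ^ 2 by nlinarith)
    rwa [Real.sqrt_sq hΔh.le] at h
  have hsle : s ≤ 5 / 4 * Δh := by
    have h := Real.sqrt_le_sqrt (show x ^ 2 + Δh ^ 2 ≤ (5 / 4 * Δh) ^ 2 by nlinarith)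
    rwa [Real.sqrt_sq (by positivity)] at h
  have hxs : x / s ≤ 1 / 4 := by
    rw [div_le_div_iff₀ hs (by norm_num)]
    nlinarith
  have h1 : 20 * x / ((x ^ 2 + Δh ^ 2) * Real.log 10) < 5 / (2 * Δh) := by
    rw [div_lt_div_iff₀ (by positivity) (by positivity)]
    nlinarith [mul_lt_mul_of_pos_left hL2 hqpos]
  have hden : s ^ 3 ≤ 2 * Δh ^ 3 := by
    have h := pow_le_pow_left₀ hs.le hsle 3
    nlinarith
  have h2 : 45 / (4 * Δh) ≤ 30 * (1 - x / s) * Δh ^ 2 / s ^ 3 := by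
    rw [div_le_div_iff₀ (by positivity) (by positivity)]
    nlinarith [mul_nonneg (by linarith : (0:ℝ) ≤ 1 / 4 - x / s) (pow_pos hΔh 3).le]
  have h3 : 5 / (2 * Δh) ≤ 45 / (4 * Δh) := by
    rw [div_le_div_iff₀ (by positivity) (by positivity)]
    nlinarith
  unfold auxD
  rw [← hsdef]
  linarith

lemma auxD_pos (Δh : ℝ) (hΔh : 0 < Δh) (x : ℝ) (hx : 2 * Δh < x) :
    0 < auxD Δh x := by
  have hx0 : 0 < x := by linarith
  have hqpos : (0:ℝ) < x ^ 2 + Δh ^ 2 := by positivity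
  set s := Real.sqrt (x ^ 2 + Δh ^ 2) with hsdef
  have hs : 0 < s := Real.sqrt_pos.mpr hqpos
  have hs2 : s ^ 2 = x ^ 2 + Δh ^ 2 := Real.sq_sqrt hqpos.le
  have hL2 := aux_log10_gt_two
  have hL3 := aux_log10_lt_three
  have hL0 : (0:ℝ) < Real.log 10 := by linarith
  have hsge : x ≤ s := by
    have h := Real.sqrt_le_sqrt (show x ^ 2 ≤ x ^ 2 + Δh ^ 2 by nlinarith)
    rwa [Real.sqrt_sq hx0.le] at h
  have hsx : (0:ℝ) < s + x := by linarith
  have key : 1 - x / s = Δh ^ 2 / (s * (s + x)) := by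
    field_simp
    linear_combination hs2
  unfold auxD
  rw [← hsdef, ← hs2, key]
  have lhs_eq : 30 * (Δh ^ 2 / (s * (s + x))) * Δh ^ 2 / s ^ 3
      = 30 * Δh ^ 4 / (s ^ 4 * (s + x)) := by
    field_simp
  rw [lhs_eq, sub_pos, div_lt_div_iff₀ (by positivity) (by positivity)]
  have hA : 4 * Δh ^ 2 < x ^ 2 := by nlinarith
  have hB : x ^ 2 ≤ s ^ 2 := by nlinarith
  have c1 : 30 * Δh ^ 4 * (s ^ 2 * Real.log 10) < 90 * Δh ^ 4 * s ^ 2 := by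
    nlinarith [pow_pos hΔh 4, pow_pos hs 2, mul_pos (pow_pos hΔh 4) (pow_pos hs 2)]
  have c2 : 90 * Δh ^ 4 * s ^ 2 < 640 * Δh ^ 4 * s ^ 2 := by
    nlinarith [pow_pos hΔh 4, pow_pos hs 2, mul_pos (pow_pos hΔh 4) (pow_pos hs 2)]
  have hx4 : 16 * Δh ^ 4 < x ^ 4 := by nlinarith
  have c3 : 640 * Δh ^ 4 * s ^ 2 < 40 * x ^ 4 * s ^ 2 := by
    nlinarith [pow_pos hs 2]
  have c4 : 40 * x ^ 4 * s ^ 2 ≤ 20 * x * (s ^ 4 * (s + x)) := by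
    have e1 : (s ^ 2 * x ^ 2) * (2 * x) ≤ s ^ 4 * (s + x) := by
      nlinarith [pow_pos hs 2, mul_pos (pow_pos hs 2) hx0, sq_nonneg (s - x),
        mul_nonneg (mul_nonneg (pow_pos hs 2).le (sub_nonneg.mpr hB)) hsx.le,
        mul_nonneg (pow_pos hs 2).le (mul_nonneg (sub_nonneg.mpr hsge) (sq_nonneg x))]
    nlinarith [hx0]
  linarith


lemma aux_hasDerivAt (Δh : ℝ) (hΔh : 0 < Δh) (x : ℝ) (hx : 0 < x) :
    HasDerivAt (fun y : ℝ => (20 / Real.log 10) * Real.log (Real.sqrt (y ^ 2 + Δh ^ 2))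
        + 15 * (1 - y / Real.sqrt (y ^ 2 + Δh ^ 2)) ^ 2) (auxD Δh x) x := by
  unfold auxD
  have hqpos : (0:ℝ) < x ^ 2 + Δh ^ 2 := by positivity
  set s := Real.sqrt (x ^ 2 + Δh ^ 2) with hsdef
  have hs : 0 < s := Real.sqrt_pos.mpr hqpos
  have hs2 : s ^ 2 = x ^ 2 + Δh ^ 2 := Real.sq_sqrt hqpos.le
  have hL : Real.log 10 ≠ 0 := ne_of_gt (Real.log_pos (by norm_num))
  have hq : HasDerivAt (fun y : ℝ => y ^ 2 + Δh ^ 2) (2 * x) x := by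
    simpa using (hasDerivAt_pow 2 x).add_const (Δh ^ 2)
  have hs' : HasDerivAt (fun y : ℝ => Real.sqrt (y ^ 2 + Δh ^ 2)) (2 * x / (2 * s)) x :=
    hq.sqrt hqpos.ne'
  have hlog : HasDerivAt (fun y : ℝ => Real.log (Real.sqrt (y ^ 2 + Δh ^ 2)))
      (2 * x / (2 * s) / s) x := hs'.log hs.ne'
  have hdiv : HasDerivAt (fun y : ℝ => y / Real.sqrt (y ^ 2 + Δh ^ 2))
      ((1 * s - x * (2 * x / (2 * s))) / s ^ 2) x :=
    (hasDerivAt_id x).div hs' hs.ne'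
  have hsub : HasDerivAt (fun y : ℝ => 1 - y / Real.sqrt (y ^ 2 + Δh ^ 2))
      (0 - (1 * s - x * (2 * x / (2 * s))) / s ^ 2) x :=
    (hasDerivAt_const x 1).sub hdiv
  have hpow : HasDerivAt (fun y : ℝ => (1 - y / Real.sqrt (y ^ 2 + Δh ^ 2)) ^ 2)
      ((2 : ℕ) * (1 - x / s) ^ 1 * (0 - (1 * s - x * (2 * x / (2 * s))) / s ^ 2)) x :=
    hsub.pow 2
  have H := ((hlog.const_mul (20 / Real.log 10)).add (hpow.const_mul 15))
  refine H.congr_deriv ?_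
  have hd : Δh ^ 2 = s ^ 2 - x ^ 2 := by linarith [hs2]
  rw [← hs2, hd]
  field_simp
  ring

lemma aux_deriv (Δh : ℝ) (hΔh : 0 < Δh) (x : ℝ) (hx : 0 < x) :
    deriv (fun y : ℝ => (20 / Real.log 10) * Real.log (Real.sqrt (y ^ 2 + Δh ^ 2))
        + 15 * (1 - y / Real.sqrt (y ^ 2 + Δh ^ 2)) ^ 2) x = auxD Δh x :=
  (aux_hasDerivAt Δh hΔh x hx).deriv

/-- The single-user path loss `h(x) = (w/ln 10)·ln √(x² + Δh²) + g₃·(1 − x/√(x² + Δh²))²`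
(w = 20, g₃ = 15, Δh > 0) is strictly decreasing near `0⁺`, strictly increasing for large
`x`, and attains a minimum at some `x* ∈ (0, ∞)`. -/
theorem stmt10 (Δh : ℝ) (hΔh : 0 < Δh) :
    ∃ h : ℝ → ℝ, (h = fun x : ℝ => (20 / Real.log 10) * Real.log (Real.sqrt (x ^ 2 + Δh ^ 2))
        + 15 * (1 - x / Real.sqrt (x ^ 2 + Δh ^ 2)) ^ 2) ∧
      (∃ ε > (0 : ℝ), StrictAntiOn h (Set.Ioo 0 ε)) ∧
      (∃ M > (0 : ℝ), StrictMonoOn h (Set.Ioi M)) ∧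
      (∃ xs ∈ Set.Ioi (0 : ℝ), IsMinOn h (Set.Ioi 0) xs) := by
  set F : ℝ → ℝ := fun x : ℝ => (20 / Real.log 10) * Real.log (Real.sqrt (x ^ 2 + Δh ^ 2))
      + 15 * (1 - x / Real.sqrt (x ^ 2 + Δh ^ 2)) ^ 2 with hF
  have hanti : StrictAntiOn F (Set.Ioo 0 (Δh / 4)) := by
    apply strictAntiOn_of_deriv_neg (convex_Ioo _ _)
    · exact fun x hx => (aux_hasDerivAt Δh hΔh x hx.1).continuousAt.continuousWithinAt
    · rw [interior_Ioo]
      intro x hx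
      rw [hF, aux_deriv Δh hΔh x hx.1]
      exact auxD_neg Δh hΔh x hx.1 hx.2
  have hmono : StrictMonoOn F (Set.Ioi (2 * Δh)) := by
    apply strictMonoOn_of_deriv_pos (convex_Ioi _)
    · exact fun x hx => (aux_hasDerivAt Δh hΔh x (by
        have : 2 * Δh < x := hx
        linarith)).continuousAt.continuousWithinAt
    · rw [interior_Ioi]
      intro x hx
      rw [hF, aux_deriv Δh hΔh x (by have : 2 * Δh < x := hx; linarith)]
      exact auxD_pos Δh hΔh x hx
  refine ⟨F, rfl, ⟨Δh / 4, by positivity, hanti⟩, ⟨2 * Δh, by positivity, hmono⟩, ?_⟩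
  have hKne : (Set.Icc (Δh / 8) (2 * Δh + 1)).Nonempty :=
    Set.nonempty_Icc.mpr (by linarith)
  have hcont : ContinuousOn F (Set.Icc (Δh / 8) (2 * Δh + 1)) := fun x hx =>
    (aux_hasDerivAt Δh hΔh x (lt_of_lt_of_le (by positivity) hx.1)).continuousAt.continuousWithinAt
  obtain ⟨xs, hxsK, hmin⟩ := isCompact_Icc.exists_isMinOn hKne hcont
  refine ⟨xs, lt_of_lt_of_le (by positivity) hxsK.1, ?_⟩
  rw [isMinOn_iff]
  intro y hy
  have hy0 : (0:ℝ) < y := hy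
  rcases lt_or_ge y (Δh / 8) with hlt | hge
  · have h8 : Δh / 8 ∈ Set.Icc (Δh / 8) (2 * Δh + 1) := ⟨le_refl _, by linarith⟩
    have h1 : F xs ≤ F (Δh / 8) := isMinOn_iff.mp hmin _ h8
    have h2 : F (Δh / 8) < F y :=
      hanti ⟨hy0, by linarith⟩ ⟨by positivity, by linarith⟩ hlt
    exact le_trans h1 h2.le
  · rcases le_or_gt y (2 * Δh + 1) with hle | hgt
    · exact isMinOn_iff.mp hmin y ⟨hge, hle⟩
    · have hb : (2 * Δh + 1) ∈ Set.Icc (Δh / 8) (2 * Δh + 1) := ⟨by linarith, le_refl _⟩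
      have h1 : F xs ≤ F (2 * Δh + 1) := isMinOn_iff.mp hmin _ hb
      have h2 : F (2 * Δh + 1) < F y :=
        hmono (by simp only [Set.mem_Ioi]; linarith) (by simp only [Set.mem_Ioi]; linarith) hgt
      exact le_trans h1 h2.le
end
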